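/- In any optimal solution maximizing total traffic, there exists a threshold index ĩ ∈ [m] such that v_l = 0 for all l ≤ ĩ and u_j = n_j for all j > ĩ, where sources are sorted so that n_1 ≥ n_2 ≥ … ≥ n_m. -/
import Mathlib


open Finset

/-- A pure routing profile in the loss network with `m` sources, where source `i`
has `n i` users: `u i` users at source `i` choose the direct path, and `r i j`
users at source `i` relay through source `j` (indirect path `(s_i, s_j, d)`). -/
structure Profile (m : ℕ) (n : Fin m → ℕ) where
  u : Fin m → ℕ
  r : Fin m → Fin m → ℕ
  diag : ∀ i, r i i = 0
  total : ∀ i, u i + ∑ j, r i j = n i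

namespace Profile

variable {m : ℕ} {n : Fin m → ℕ}

/-- Number of users relaying through source `j`. -/
def v (p : Profile m n) (j : Fin m) : ℕ := ∑ i, p.r i j

/-- Traffic rate on the direct link `(s_i, d)`: `T_i = u_i φ + v_i q̄ φ`,
where `q̄` is the sidelink success probability. -/
noncomputable def T (φ qb : ℝ) (p : Profile m n) (i : Fin m) : ℝ :=
  (p.u i : ℝ) * φ + (p.v i : ℝ) * qb * φ

/-- Total traffic rate arriving at the destination: `TR = Σ_i μ T_i/(T_i + μ)`. -/
noncomputable def TR (φ qb μ : ℝ) (p : Profile m n) : ℝ :=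
  ∑ i, μ * p.T φ qb i / (p.T φ qb i + μ)

/-- Nash equilibrium: no single user can strictly decrease its loss rate by a
unilateral change of route.  A direct user at `s_i` (present iff `u i > 0`) may
deviate to the indirect path via any `j ≠ i`; a user at `s_i` relaying via `l`
(present iff `r i l > 0`) may deviate to its direct path or to the indirect path
via any other `j`.  Loss rates follow the loss-network formulas, with the traffic
of the target link adjusted for the deviating user's own flow. -/
noncomputable def isNE (φ q μ : ℝ) (p : Profile m n) : Prop :=
  (∀ i j : Fin m, j ≠ i → 0 < p.u i →
      φ * p.T φ (1 - q) i / (p.T φ (1 - q) i + μ) ≤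
        q * φ + (1 - q) * φ * (p.T φ (1 - q) j + (1 - q) * φ) /
          (p.T φ (1 - q) j + (1 - q) * φ + μ)) ∧
  (∀ i l : Fin m, l ≠ i → 0 < p.r i l →
      (q * φ + (1 - q) * φ * p.T φ (1 - q) l / (p.T φ (1 - q) l + μ) ≤
        φ * (p.T φ (1 - q) i + φ) / (p.T φ (1 - q) i + φ + μ)) ∧
      (∀ j : Fin m, j ≠ i → j ≠ l →
        q * φ + (1 - q) * φ * p.T φ (1 - q) l / (p.T φ (1 - q) l + μ) ≤
          q * φ + (1 - q) * φ * (p.T φ (1 - q) j + (1 - q) * φ) /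
            (p.T φ (1 - q) j + (1 - q) * φ + μ)))

end Profile

/-! ### Auxiliary analytic lemmas -/

noncomputable def F (μ x : ℝ) : ℝ := μ * x / (x + μ)

lemma F_lt {μ : ℝ} (hμ : 0 < μ) {a b : ℝ} (ha : 0 ≤ a) (hab : a < b) :
    F μ a < F μ b := by
  unfold F
  rw [div_lt_div_iff₀ (by linarith) (by linarith)]
  nlinarith [mul_pos (mul_pos hμ hμ) (sub_pos.mpr hab)]

lemma F_chord {μ : ℝ} (hμ : 0 < μ) (x h : ℝ) (hx : 0 ≤ x) (hh : 0 ≤ h) :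
    F μ (x + h) - F μ x = μ^2 * h / ((x + μ) * (x + h + μ)) := by
  unfold F
  rw [div_sub_div _ _ (by positivity) (by positivity),
    div_eq_div_iff (by positivity) (by positivity)]
  ring

lemma ineq_I {μ : ℝ} (hμ : 0 < μ) {a b s φ : ℝ} (ha : 0 ≤ a) (hsb : s ≤ b)
    (h : a + s ≤ b) (hs : 0 < s) (hsφ : s < φ) :
    F μ b - F μ (b - s) < F μ (a + φ) - F μ a := by
  have hφ : 0 < φ := hs.trans hsφ
  have h1 : F μ (a + φ) - F μ a = μ^2 * φ / ((a + μ) * (a + φ + μ)) :=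
    F_chord hμ a φ ha hφ.le
  have h2 : F μ b - F μ (b - s) = μ^2 * s / ((b - s + μ) * (b + μ)) := by
    have := F_chord hμ (b - s) s (by linarith) hs.le
    rw [show b - s + s = b by ring] at this
    rw [this]
  have hbs : (0:ℝ) < b - s + μ := by linarith
  have hb : (0:ℝ) < b + μ := by linarith
  have hA : (0:ℝ) < a + μ := by linarith
  have hAφ : (0:ℝ) < a + φ + μ := by linarith
  rw [h1, h2, div_lt_div_iff₀ (mul_pos hbs hb) (mul_pos hA hAφ)]
  have k1 : (a + μ) * (a + s + μ) ≤ (b - s + μ) * (b + μ) := by nlinarith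
  have k2 : s * ((a + μ) * (a + φ + μ)) < φ * ((a + μ) * (a + s + μ)) := by
    nlinarith [mul_pos (sub_pos.mpr hsφ) (mul_pos hA hA)]
  have k3 : s * ((a + μ) * (a + φ + μ)) < φ * ((b - s + μ) * (b + μ)) :=
    k2.trans_le (mul_le_mul_of_nonneg_left k1 hφ.le)
  nlinarith [mul_lt_mul_of_pos_left k3 (pow_pos hμ 2)]

lemma ineq_II {μ : ℝ} (hμ : 0 < μ) {a b s : ℝ} (ha : 0 ≤ a) (hsb : s ≤ b)
    (h : a + s < b) (hs : 0 < s) :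
    F μ b - F μ (b - s) < F μ (a + s) - F μ a := by
  have h1 : F μ (a + s) - F μ a = μ^2 * s / ((a + μ) * (a + s + μ)) :=
    F_chord hμ a s ha hs.le
  have h2 : F μ b - F μ (b - s) = μ^2 * s / ((b - s + μ) * (b + μ)) := by
    have := F_chord hμ (b - s) s (by linarith) hs.le
    rw [show b - s + s = b by ring] at this
    rw [this]
  have hbs : (0:ℝ) < b - s + μ := by linarith
  have hb : (0:ℝ) < b + μ := by linarith
  have hA : (0:ℝ) < a + μ := by linarith
  have hAs : (0:ℝ) < a + s + μ := by linarith
  rw [h1, h2, div_lt_div_iff₀ (mul_pos hbs hb) (mul_pos hA hAs)]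
  have k1 : (a + μ) * (a + s + μ) < (b - s + μ) * (b + μ) := by nlinarith
  nlinarith [mul_lt_mul_of_pos_left k1 (mul_pos (pow_pos hμ 2) hs)]

/-! ### Sum bookkeeping -/

lemma sum_update_nat {m : ℕ} (f : Fin m → ℕ) (a : Fin m) (b : ℕ) :
    (∑ x, Function.update f a b x) + f a = (∑ x, f x) + b := by
  rw [Finset.sum_update_of_mem (mem_univ a),
    ← Finset.sum_erase_add univ f (mem_univ a), Finset.sdiff_singleton_eq_erase]
  ring

lemma sum_col_update {m : ℕ} (r : Fin m → Fin m → ℕ) (i : Fin m) (row : Fin m → ℕ)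
    (j : Fin m) :
    (∑ a, Function.update r i row a j) + r i j = (∑ a, r a j) + row j := by
  have h : ∀ a, Function.update r i row a j
      = Function.update (fun a => r a j) i (row j) a := by
    intro a
    by_cases h : a = i <;> simp [Function.update, h]
  simp only [h]
  exact sum_update_nat (fun a => r a j) i (row j)

namespace Profile

variable {m : ℕ} {n : Fin m → ℕ}

lemma T_nonneg {φ qb : ℝ} (hφ : 0 ≤ φ) (hqb : 0 ≤ qb) (p : Profile m n) (i : Fin m) :
    0 ≤ p.T φ qb i := by
  unfold T; positivity

lemma TR_sub {φ qb μ : ℝ} (p p' : Profile m n) (S : Finset (Fin m))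
    (h : ∀ i, i ∉ S → p'.T φ qb i = p.T φ qb i) :
    p'.TR φ qb μ - p.TR φ qb μ
      = ∑ i ∈ S, (F μ (p'.T φ qb i) - F μ (p.T φ qb i)) := by
  unfold TR
  rw [← Finset.sum_sub_distrib,
    ← Finset.sum_subset (Finset.subset_univ S) (fun i _ hi => by rw [h i hi]; ring)]
  rfl

lemma v_ge (p : Profile m n) (i j : Fin m) : p.r i j ≤ p.v j := by
  unfold v
  exact Finset.single_le_sum (f := fun a => p.r a j) (fun a _ => Nat.zero_le _) (mem_univ i)

lemma u_le (p : Profile m n) (i : Fin m) : p.u i ≤ n i := by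
  have := p.total i; omega

lemma exists_relay (p : Profile m n) {j : Fin m} (h : p.u j < n j) :
    ∃ k, 0 < p.r j k := by
  by_contra hc
  push_neg at hc
  have h0 : ∑ k, p.r j k = 0 := Finset.sum_eq_zero (fun k _ => Nat.le_zero.mp (hc k))
  have := p.total j
  omega

lemma exists_source {p : Profile m n} {l : Fin m} (h : 0 < p.v l) :
    ∃ i, 0 < p.r i l := by
  by_contra hc
  push_neg at hc
  have h0 : p.v l = 0 := Finset.sum_eq_zero (fun k _ => Nat.le_zero.mp (hc k))
  omega

lemma vqb_le_T {φ qb : ℝ} (hφ : 0 < φ) (hqb : 0 < qb) (p : Profile m n)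
    {i l : Fin m} (h : 0 < p.r i l) : qb * φ ≤ p.T φ qb l := by
  have h1 : (1 : ℝ) ≤ (p.v l : ℝ) := by
    exact_mod_cast le_trans h (p.v_ge i l)
  have h2 : (0:ℝ) ≤ (p.u l : ℝ) * φ := by positivity
  unfold T
  nlinarith [mul_le_mul_of_nonneg_right h1 (show (0:ℝ) ≤ qb * φ by positivity)]

/-- Move W: reroute one user at `i` relaying via `l` to the direct path at `i`. -/
lemma moveW_bound {φ qb μ : ℝ} (hφ : 0 < φ) (hμ : 0 < μ) (hqb : 0 < qb) (hqb1 : qb < 1)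
    (p : Profile m n) (hopt : ∀ p' : Profile m n, p'.TR φ qb μ ≤ p.TR φ qb μ)
    {i l : Fin m} (h : 0 < p.r i l) :
    p.T φ qb l < p.T φ qb i + qb * φ := by
  by_contra hc
  push_neg at hc
  have hil : i ≠ l := by rintro rfl; simp [p.diag i] at h
  set row : Fin m → ℕ := Function.update (p.r i) l (p.r i l - 1) with hrow
  have hsum : (∑ x, row x) + p.r i l = (∑ x, p.r i x) + (p.r i l - 1) :=
    sum_update_nat (p.r i) l (p.r i l - 1)
  have hdiag : ∀ a, Function.update p.r i row a a = 0 := by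
    intro a
    by_cases ha : a = i
    · subst ha
      simp only [Function.update_self, hrow, Function.update_of_ne hil, p.diag]
    · simp only [Function.update_of_ne ha, p.diag]
  have htot : ∀ a, Function.update p.u i (p.u i + 1) a
      + ∑ j, Function.update p.r i row a j = n a := by
    intro a
    by_cases ha : a = i
    · subst ha
      simp only [Function.update_self]
      have := p.total a
      omega
    · simp only [Function.update_of_ne ha, p.total a]
  let p' : Profile m n := ⟨Function.update p.u i (p.u i + 1), Function.update p.r i row,
    hdiag, htot⟩
  have hvcol : ∀ j, p'.v j + p.r i j = p.v j + row j := fun j => sum_col_update p.r i row j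
  have hv : ∀ j, j ≠ l → p'.v j = p.v j := by
    intro j hj
    have h1 := hvcol j
    have h2 : row j = p.r i j := Function.update_of_ne hj _ _
    omega
  have hvl : p'.v l + 1 = p.v l := by
    have h1 := hvcol l
    have h2 : row l = p.r i l - 1 := Function.update_self _ _ _
    omega
  have hT : ∀ x, x ∉ ({i, l} : Finset (Fin m)) → p'.T φ qb x = p.T φ qb x := by
    intro x hx
    simp only [mem_insert, mem_singleton, not_or] at hx
    unfold T
    rw [show p'.u x = p.u x from Function.update_of_ne hx.1 _ _, hv x hx.2]
  have hTi : p'.T φ qb i = p.T φ qb i + φ := by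
    unfold T
    rw [show p'.u i = p.u i + 1 from Function.update_self _ _ _, hv i hil]
    push_cast
    ring
  have hTl : p'.T φ qb l = p.T φ qb l - qb * φ := by
    unfold T
    rw [show p'.u l = p.u l from Function.update_of_ne (Ne.symm hil) _ _]
    have hcast : (p'.v l : ℝ) = (p.v l : ℝ) - 1 := by
      rw [← hvl]; push_cast; ring
    rw [hcast]
    ring
  have hdiff := p.TR_sub (φ := φ) (qb := qb) (μ := μ) p' {i, l} hT
  rw [Finset.sum_pair hil, hTi, hTl] at hdiff
  have hkey := ineq_I hμ (p.T_nonneg hφ.le hqb.le i) (p.vqb_le_T hφ hqb h) hc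
    (by positivity : (0:ℝ) < qb * φ) (by nlinarith : qb * φ < φ)
  have := hopt p'
  linarith

/-- Move X: reroute one user at `i` relaying via `l` to relay via `k` instead. -/
lemma moveX_bound {φ qb μ : ℝ} (hφ : 0 < φ) (hμ : 0 < μ) (hqb : 0 < qb) (hqb1 : qb < 1)
    (p : Profile m n) (hopt : ∀ p' : Profile m n, p'.TR φ qb μ ≤ p.TR φ qb μ)
    {i l k : Fin m} (h : 0 < p.r i l) (hki : k ≠ i) (hkl : k ≠ l) :
    p.T φ qb l ≤ p.T φ qb k + qb * φ := by
  by_contra hc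
  push_neg at hc
  have hil : i ≠ l := by rintro rfl; simp [p.diag i] at h
  set g : Fin m → ℕ := Function.update (p.r i) l (p.r i l - 1) with hg
  set row : Fin m → ℕ := Function.update g k (p.r i k + 1) with hrow
  have hsum1 : (∑ x, g x) + p.r i l = (∑ x, p.r i x) + (p.r i l - 1) :=
    sum_update_nat (p.r i) l (p.r i l - 1)
  have hsum2 : (∑ x, row x) + g k = (∑ x, g x) + (p.r i k + 1) :=
    sum_update_nat g k (p.r i k + 1)
  have hgk : g k = p.r i k := Function.update_of_ne hkl _ _
  have hrowl : row l = p.r i l - 1 := by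
    rw [hrow, Function.update_of_ne (Ne.symm hkl), hg, Function.update_self]
  have hrowk : row k = p.r i k + 1 := Function.update_self _ _ _
  have hrowj : ∀ j, j ≠ l → j ≠ k → row j = p.r i j := by
    intro j hjl hjk
    rw [hrow, Function.update_of_ne hjk, hg, Function.update_of_ne hjl]
  have hdiag : ∀ a, Function.update p.r i row a a = 0 := by
    intro a
    by_cases ha : a = i
    · subst ha
      rw [Function.update_self, hrowj a hil (Ne.symm hki), p.diag]
    · simp only [Function.update_of_ne ha, p.diag]
  have htot : ∀ a, p.u a + ∑ j, Function.update p.r i row a j = n a := by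
    intro a
    by_cases ha : a = i
    · subst ha
      simp only [Function.update_self]
      have := p.total a
      omega
    · simp only [Function.update_of_ne ha, p.total a]
  let p' : Profile m n := ⟨p.u, Function.update p.r i row, hdiag, htot⟩
  have hvcol : ∀ j, p'.v j + p.r i j = p.v j + row j := fun j => sum_col_update p.r i row j
  have hv : ∀ j, j ≠ l → j ≠ k → p'.v j = p.v j := by
    intro j hjl hjk
    have h1 := hvcol j
    have h2 := hrowj j hjl hjk
    omega
  have hvl : p'.v l + 1 = p.v l := by
    have h1 := hvcol l
    omega
  have hvk : p'.v k = p.v k + 1 := by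
    have h1 := hvcol k
    omega
  have hT : ∀ x, x ∉ ({l, k} : Finset (Fin m)) → p'.T φ qb x = p.T φ qb x := by
    intro x hx
    simp only [mem_insert, mem_singleton, not_or] at hx
    unfold T
    rw [hv x hx.1 hx.2]
  have hTk : p'.T φ qb k = p.T φ qb k + qb * φ := by
    unfold T
    rw [hvk]
    push_cast
    ring
  have hTl : p'.T φ qb l = p.T φ qb l - qb * φ := by
    unfold T
    have hcast : (p'.v l : ℝ) = (p.v l : ℝ) - 1 := by
      rw [← hvl]; push_cast; ring
    rw [hcast]
    ring
  have hdiff := p.TR_sub (φ := φ) (qb := qb) (μ := μ) p' {l, k} hT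
  rw [Finset.sum_pair (Ne.symm hkl : l ≠ k), hTk, hTl] at hdiff
  have hkey := ineq_II hμ (p.T_nonneg hφ.le hqb.le k) (p.vqb_le_T hφ hqb h) hc
    (by positivity : (0:ℝ) < qb * φ)
  have := hopt p'
  linarith

/-- No source both receives relayed traffic and sends relaying users. -/
lemma no_through {φ qb μ : ℝ} (hφ : 0 < φ) (hμ : 0 < μ) (hqb : 0 < qb) (hqb1 : qb < 1)
    (p : Profile m n) (hopt : ∀ p' : Profile m n, p'.TR φ qb μ ≤ p.TR φ qb μ)
    {i l k : Fin m} (hil : 0 < p.r i l) (hlk : 0 < p.r l k) : False := by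
  have hil' : i ≠ l := by rintro rfl; simp [p.diag i] at hil
  have hlk' : l ≠ k := by rintro rfl; simp [p.diag l] at hlk
  have hq : 0 < φ - qb * φ := by nlinarith
  by_cases hik : i = k
  · -- mutual relaying between k := i and l
    subst hik
    set rowi : Fin m → ℕ := Function.update (p.r i) l (p.r i l - 1) with hrowi
    set rowl : Fin m → ℕ := Function.update (p.r l) i (p.r l i - 1) with hrowl
    set r1 : Fin m → Fin m → ℕ := Function.update p.r i rowi with hr1
    set r2 : Fin m → Fin m → ℕ := Function.update r1 l rowl with hr2
    set u2 : Fin m → ℕ :=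
      Function.update (Function.update p.u i (p.u i + 1)) l (p.u l + 1) with hu2
    have hr1l : r1 l = p.r l := Function.update_of_ne (Ne.symm hil') _ _
    have hdiag : ∀ a, r2 a a = 0 := by
      intro a
      by_cases hal : a = l
      · subst hal
        rw [hr2, Function.update_self, hrowl, Function.update_of_ne (Ne.symm hil'), p.diag]
      · rw [hr2, Function.update_of_ne hal]
        by_cases hai : a = i
        · subst hai
          rw [hr1, Function.update_self, hrowi, Function.update_of_ne hil', p.diag]
        · rw [hr1, Function.update_of_ne hai, p.diag]
    have htot : ∀ a, u2 a + ∑ j, r2 a j = n a := by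
      intro a
      by_cases hal : a = l
      · subst hal
        have hs : (∑ x, rowl x) + p.r a i = (∑ x, p.r a x) + (p.r a i - 1) :=
          sum_update_nat (p.r a) i (p.r a i - 1)
        have := p.total a
        rw [hu2, Function.update_self, hr2, Function.update_self]
        omega
      · rw [hu2, Function.update_of_ne hal, hr2, Function.update_of_ne hal]
        by_cases hai : a = i
        · subst hai
          have hs : (∑ x, rowi x) + p.r a l = (∑ x, p.r a x) + (p.r a l - 1) :=
            sum_update_nat (p.r a) l (p.r a l - 1)
          have := p.total a
          rw [Function.update_self, hr1, Function.update_self]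
          omega
        · rw [Function.update_of_ne hai, hr1, Function.update_of_ne hai, p.total a]
    let p' : Profile m n := ⟨u2, r2, hdiag, htot⟩
    have hvcol2 : ∀ j, p'.v j + r1 l j = (∑ a, r1 a j) + rowl j :=
      fun j => sum_col_update r1 l rowl j
    have hvcol1 : ∀ j, (∑ a, r1 a j) + p.r i j = p.v j + rowi j :=
      fun j => sum_col_update p.r i rowi j
    have hv : ∀ j, p'.v j + p.r l j + p.r i j = p.v j + rowi j + rowl j := by
      intro j
      have h1 := hvcol1 j
      have h2 := hvcol2 j
      rw [hr1l] at h2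
      omega
    have hvl : p'.v l + 1 = p.v l := by
      have h1 := hv l
      have h2 : rowi l = p.r i l - 1 := Function.update_self _ _ _
      have h3 : rowl l = p.r l l := Function.update_of_ne (Ne.symm hil') _ _
      omega
    have hvi : p'.v i + 1 = p.v i := by
      have h1 := hv i
      have h2 : rowi i = p.r i i := Function.update_of_ne hil' _ _
      have h3 : rowl i = p.r l i - 1 := Function.update_self _ _ _
      omega
    have hvother : ∀ j, j ≠ i → j ≠ l → p'.v j = p.v j := by
      intro j hji hjl
      have h1 := hv j
      have h2 : rowi j = p.r i j := Function.update_of_ne hjl _ _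
      have h3 : rowl j = p.r l j := Function.update_of_ne hji _ _
      omega
    have hT : ∀ x, x ∉ ({i, l} : Finset (Fin m)) → p'.T φ qb x = p.T φ qb x := by
      intro x hx
      simp only [mem_insert, mem_singleton, not_or] at hx
      unfold T
      rw [show p'.u x = p.u x by
          rw [show p'.u = u2 from rfl, hu2, Function.update_of_ne hx.2,
            Function.update_of_ne hx.1],
        hvother x hx.1 hx.2]
    have hTi : p'.T φ qb i = p.T φ qb i + (φ - qb * φ) := by
      unfold T
      have hcast : (p'.v i : ℝ) = (p.v i : ℝ) - 1 := by rw [← hvi]; push_cast; ring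
      have huu : p'.u i = p.u i + 1 := by
        rw [show p'.u = u2 from rfl, hu2, Function.update_of_ne hil', Function.update_self]
      rw [hcast, huu]
      push_cast
      ring
    have hTl : p'.T φ qb l = p.T φ qb l + (φ - qb * φ) := by
      unfold T
      have hcast : (p'.v l : ℝ) = (p.v l : ℝ) - 1 := by rw [← hvl]; push_cast; ring
      have huu : p'.u l = p.u l + 1 := by
        rw [show p'.u = u2 from rfl, hu2, Function.update_self]
      rw [hcast, huu]
      push_cast
      ring
    have hdiff := p.TR_sub (φ := φ) (qb := qb) (μ := μ) p' {i, l} hT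
    rw [Finset.sum_pair hil', hTi, hTl] at hdiff
    have k1 := F_lt hμ (p.T_nonneg hφ.le hqb.le i)
      (by linarith : p.T φ qb i < p.T φ qb i + (φ - qb * φ))
    have k2 := F_lt hμ (p.T_nonneg hφ.le hqb.le l)
      (by linarith : p.T φ qb l < p.T φ qb l + (φ - qb * φ))
    have := hopt p'
    linarith
  · -- i ≠ k : reroute i's relayer from l to k, and l's relayer from k to direct
    have hki : k ≠ i := Ne.symm hik
    set rowi : Fin m → ℕ :=
      Function.update (Function.update (p.r i) l (p.r i l - 1)) k (p.r i k + 1) with hrowi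
    set rowl : Fin m → ℕ := Function.update (p.r l) k (p.r l k - 1) with hrowl
    set r1 : Fin m → Fin m → ℕ := Function.update p.r i rowi with hr1
    set r2 : Fin m → Fin m → ℕ := Function.update r1 l rowl with hr2
    set u2 : Fin m → ℕ := Function.update p.u l (p.u l + 1) with hu2
    have hr1l : r1 l = p.r l := Function.update_of_ne (Ne.symm hil') _ _
    have hrowi_l : rowi l = p.r i l - 1 := by
      rw [hrowi, Function.update_of_ne (fun e => hlk' (e.symm ▸ rfl) : l ≠ k),
        Function.update_self]
    have hrowi_k : rowi k = p.r i k + 1 := Function.update_self _ _ _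
    have hrowi_j : ∀ j, j ≠ l → j ≠ k → rowi j = p.r i j := by
      intro j hjl hjk
      rw [hrowi, Function.update_of_ne hjk, Function.update_of_ne hjl]
    have hdiag : ∀ a, r2 a a = 0 := by
      intro a
      by_cases hal : a = l
      · subst hal
        rw [hr2, Function.update_self, hrowl, Function.update_of_ne hlk', p.diag]
      · rw [hr2, Function.update_of_ne hal]
        by_cases hai : a = i
        · subst hai
          rw [hr1, Function.update_self, hrowi_j a hil' (Ne.symm hki), p.diag]
        · rw [hr1, Function.update_of_ne hai, p.diag]
    have htot : ∀ a, u2 a + ∑ j, r2 a j = n a := by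
      intro a
      by_cases hal : a = l
      · subst hal
        have hs : (∑ x, rowl x) + p.r a k = (∑ x, p.r a x) + (p.r a k - 1) :=
          sum_update_nat (p.r a) k (p.r a k - 1)
        have := p.total a
        rw [hu2, Function.update_self, hr2, Function.update_self]
        omega
      · rw [hu2, Function.update_of_ne hal, hr2, Function.update_of_ne hal]
        by_cases hai : a = i
        · subst hai
          set g : Fin m → ℕ := Function.update (p.r a) l (p.r a l - 1) with hgdef
          have hs1 : (∑ x, g x) + p.r a l = (∑ x, p.r a x) + (p.r a l - 1) :=
            sum_update_nat (p.r a) l (p.r a l - 1)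
          have hs2 : (∑ x, rowi x) + g k = (∑ x, g x) + (p.r a k + 1) :=
            sum_update_nat g k (p.r a k + 1)
          have hgk : g k = p.r a k := Function.update_of_ne (Ne.symm hlk') _ _
          have := p.total a
          rw [hr1, Function.update_self]
          omega
        · rw [hr1, Function.update_of_ne hai, p.total a]
    let p' : Profile m n := ⟨u2, r2, hdiag, htot⟩
    have hvcol2 : ∀ j, p'.v j + r1 l j = (∑ a, r1 a j) + rowl j :=
      fun j => sum_col_update r1 l rowl j
    have hvcol1 : ∀ j, (∑ a, r1 a j) + p.r i j = p.v j + rowi j :=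
      fun j => sum_col_update p.r i rowi j
    have hv : ∀ j, p'.v j + p.r l j + p.r i j = p.v j + rowi j + rowl j := by
      intro j
      have h1 := hvcol1 j
      have h2 := hvcol2 j
      rw [hr1l] at h2
      omega
    have hvl : p'.v l + 1 = p.v l := by
      have h1 := hv l
      have h3 : rowl l = p.r l l := Function.update_of_ne hlk' _ _
      omega
    have hvk : p'.v k = p.v k := by
      have h1 := hv k
      have h3 : rowl k = p.r l k - 1 := Function.update_self _ _ _
      omega
    have hvother : ∀ j, j ≠ l → j ≠ k → p'.v j = p.v j := by
      intro j hjl hjk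
      have h1 := hv j
      have h2 := hrowi_j j hjl hjk
      have h3 : rowl j = p.r l j := Function.update_of_ne hjk _ _
      omega
    have hu' : ∀ x, x ≠ l → p'.u x = p.u x := by
      intro x hx
      rw [show p'.u = u2 from rfl, hu2, Function.update_of_ne hx]
    have hT : ∀ x, x ∉ ({l} : Finset (Fin m)) → p'.T φ qb x = p.T φ qb x := by
      intro x hx
      simp only [mem_singleton] at hx
      unfold T
      by_cases hxk : x = k
      · subst hxk
        rw [hu' x hx, hvk]
      · rw [hu' x hx, hvother x hx hxk]
    have hTl : p'.T φ qb l = p.T φ qb l + (φ - qb * φ) := by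
      unfold T
      have hcast : (p'.v l : ℝ) = (p.v l : ℝ) - 1 := by rw [← hvl]; push_cast; ring
      have huu : p'.u l = p.u l + 1 := by
        rw [show p'.u = u2 from rfl, hu2, Function.update_self]
      rw [hcast, huu]
      push_cast
      ring
    have hdiff := p.TR_sub (φ := φ) (qb := qb) (μ := μ) p' {l} hT
    rw [Finset.sum_singleton, hTl] at hdiff
    have k2 := F_lt hμ (p.T_nonneg hφ.le hqb.le l)
      (by linarith : p.T φ qb l < p.T φ qb l + (φ - qb * φ))
    have := hopt p'
    linarith

end Profile

/-- In any optimal solution, with sources sorted so that `n 1 ≥ n 2 ≥ … ≥ n m`,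
there is a threshold index `ĩ` such that no user relays through any source
`l ≤ ĩ`, and all users of every source `j > ĩ` choose the direct path. -/
theorem opt_threshold {m : ℕ} {n : Fin m → ℕ} (hm : 0 < m) (φ μ q : ℝ)
    (hφ : 0 < φ) (hμ : 0 < μ) (hq0 : 0 < q) (hq1 : q < 1)
    (hsorted : ∀ i j : Fin m, i ≤ j → n j ≤ n i)
    (p : Profile m n)
    (hopt : ∀ p' : Profile m n, p'.TR φ (1 - q) μ ≤ p.TR φ (1 - q) μ) :
    ∃ itilde : Fin m,
      (∀ l : Fin m, l ≤ itilde → p.v l = 0) ∧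
      (∀ j : Fin m, itilde < j → p.u j = n j) := by
  set qb : ℝ := 1 - q with hqbdef
  have hqb : 0 < qb := by simp [hqbdef]; linarith
  have hqb1 : qb < 1 := by simp [hqbdef]; linarith
  by_cases hne : (univ.filter (fun j => p.u j < n j)).Nonempty
  · refine ⟨(univ.filter (fun j => p.u j < n j)).max' hne, ?_, ?_⟩
    · -- no relays through any l ≤ j
      set j := (univ.filter (fun j => p.u j < n j)).max' hne with hj
      intro l hl
      by_contra hvl
      have hvl' : 0 < p.v l := Nat.pos_of_ne_zero hvl
      obtain ⟨i, hil⟩ := Profile.exists_source hvl'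
      have hj_mem : j ∈ univ.filter (fun j => p.u j < n j) := Finset.max'_mem _ hne
      have huj : p.u j < n j := (mem_filter.mp hj_mem).2
      obtain ⟨k, hjk⟩ := p.exists_relay huj
      -- case l = j
      by_cases hlj : l = j
      · exact p.no_through hφ hμ hqb hqb1 hopt hil (hlj ▸ hjk)
      -- l ≠ j
      have hvj : p.v j = 0 := by
        rcases Nat.eq_zero_or_pos (p.v j) with h0 | hpos
        · exact h0
        · obtain ⟨i', hi'⟩ := Profile.exists_source hpos
          exact absurd (p.no_through hφ hμ hqb hqb1 hopt hi' hjk) not_false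
      have hul : p.u l = n l := by
        rcases lt_or_eq_of_le (p.u_le l) with hlt | he
        · obtain ⟨k', hk'⟩ := p.exists_relay hlt
          exact absurd (p.no_through hφ hμ hqb hqb1 hopt hil hk') not_false
        · exact he
      have hTk : p.T φ qb k < p.T φ qb j + qb * φ :=
        p.moveW_bound hφ hμ hqb hqb1 hopt hjk
      have hTlk : p.T φ qb l ≤ p.T φ qb k + qb * φ := by
        by_cases hkl : k = l
        · subst hkl
          have : 0 < qb * φ := by positivity
          linarith
        by_cases hki : k = i
        · subst hki
          exact (p.moveW_bound hφ hμ hqb hqb1 hopt hil).le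
        · exact p.moveX_bound hφ hμ hqb hqb1 hopt hil hki hkl
      -- numeric contradiction
      have hnl : (n j : ℝ) ≤ (n l : ℝ) := by
        exact_mod_cast hsorted l j hl
      have huj' : (p.u j : ℝ) + 1 ≤ (n j : ℝ) := by exact_mod_cast huj
      have hvl1 : (1 : ℝ) ≤ (p.v l : ℝ) := by exact_mod_cast hvl'
      have hTl_ge : (n l : ℝ) * φ + qb * φ ≤ p.T φ qb l := by
        unfold Profile.T
        rw [hul]
        nlinarith [mul_le_mul_of_nonneg_right hvl1 (show (0:ℝ) ≤ qb * φ by positivity)]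
      have hTj_eq : p.T φ qb j = (p.u j : ℝ) * φ := by
        unfold Profile.T
        rw [hvj]
        push_cast
        ring
      have hqφ : qb * φ < φ := by nlinarith
      nlinarith
    · -- all users beyond j are direct
      intro j' hj'
      rcases lt_or_eq_of_le (p.u_le j') with hlt | he
      · exfalso
        have hmem : j' ∈ univ.filter (fun j => p.u j < n j) :=
          mem_filter.mpr ⟨mem_univ _, hlt⟩
        exact absurd (Finset.le_max' _ j' hmem) (not_le.mpr hj')
      · exact he
  · -- no source has a relaying user
    rw [Finset.not_nonempty_iff_eq_empty, Finset.filter_eq_empty_iff] at hne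
    refine ⟨⟨0, hm⟩, fun l _ => ?_, fun j _ => ?_⟩
    · have hall : ∀ i, p.u i = n i := by
        intro i
        rcases lt_or_eq_of_le (p.u_le i) with hlt | he
        · exact absurd hlt (hne (mem_univ i))
        · exact he
      have hr0 : ∀ i k, p.r i k = 0 := by
        intro i k
        have := p.total i
        rw [hall i] at this
        have hsum : ∑ j, p.r i j = 0 := by omega
        exact Finset.sum_eq_zero_iff.mp hsum k (mem_univ k)
      exact Finset.sum_eq_zero (fun i _ => hr0 i l)
    · rcases lt_or_eq_of_le (p.u_le j) with hlt | he
      · exact absurd hlt (hne (mem_univ j))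
      · exact he
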